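/- Let G be a finite group and n ≥ 1. Two elements (ξ,σ) and (ζ,ρ) of the wreath product G ≀ S_n = (Fin n → G) ⋊ Perm(Fin n) are conjugate in G ≀ S_n if and only if the following multisets coincide: the multiset, indexed by the orbits O of σ on Fin n, of pairs (|O|, conjugacy class in G of the cycle product of ξ along O), and the corresponding multiset for (ζ,ρ). (The conjugacy class of the cycle product of ξ along an orbit O does not depend on the choice of base point x ∈ O, so these multisets are well defined.) -/

import Mathlib

/-- The cycle product of `ξ : Fin n → G` along the orbit of `x` under `σ`:
if `d ≥ 1` is the size of the orbit of `x` (the minimal period of `x` under `σ`),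
this is `ξ(σ^{d-1} x) · ξ(σ^{d-2} x) ⋯ ξ(σ x) · ξ(x)`. -/
noncomputable def cycleProd {G : Type*} [Group G] {n : ℕ} (σ : Equiv.Perm (Fin n)) (ξ : Fin n → G)
    (x : Fin n) : G :=
  (((List.range (Function.minimalPeriod (⇑σ) x)).map (fun k => ξ ((σ ^ k) x))).reverse).prod

/-- The action of `Perm (Fin n)` on `Fin n → G` by permuting coordinates:
`(σ • ξ) x = ξ (σ⁻¹ x)`. -/
def wreathAction (G : Type*) [Group G] (n : ℕ) :
    Equiv.Perm (Fin n) →* MulAut (Fin n → G) :=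
  MonoidHom.mk' (fun σ => MulEquiv.arrowCongr (σ : Fin n ≃ Fin n) (MulEquiv.refl G))
    (fun σ τ => by
      ext ξ x
      rfl)

/-- The multiset, indexed by the orbits `O` of `σ` on `Fin n`, of pairs
`(|O|, conjugacy class of the cycle product of ξ along O)`.  Each orbit is represented
by `Quotient.out`, a choice of base point; by the well-definedness noted in the paper
the resulting pair is independent of this choice. -/
noncomputable def orbitData {G : Type*} [Group G] {n : ℕ} (σ : Equiv.Perm (Fin n))
    (ξ : Fin n → G) : Multiset (ℕ × ConjClasses G) :=
  letI : Fintype (Quotient (Equiv.Perm.SameCycle.setoid σ)) := Fintype.ofFinite _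
  (Finset.univ : Finset (Quotient (Equiv.Perm.SameCycle.setoid σ))).val.map
    (fun q => (Function.minimalPeriod (⇑σ) q.out, ConjClasses.mk (cycleProd σ ξ q.out)))

namespace WreathConj

open Equiv Function Equiv.Perm

variable {G : Type*} [Group G] {n : ℕ}

theorem Perm.inv_apply_self {α : Type*} (f : Perm α) (x : α) : f⁻¹ (f x) = x :=
  f.symm_apply_apply x

theorem Perm.apply_inv_self {α : Type*} (f : Perm α) (x : α) : f (f⁻¹ x) = x :=
  f.apply_symm_apply x

/-- Reversed product `f (k-1) * ⋯ * f 1 * f 0`. -/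
def revProd (f : ℕ → G) (k : ℕ) : G := ((List.range k).map f).reverse.prod

@[simp] lemma revProd_zero (f : ℕ → G) : revProd f 0 = 1 := rfl

lemma revProd_succ (f : ℕ → G) (k : ℕ) : revProd f (k + 1) = f k * revProd f k := by
  simp [revProd, List.range_succ]

lemma revProd_telescope (a b : ℕ → G) (d : ℕ) :
    revProd (fun k => a (k + 1) * b k * (a k)⁻¹) d = a d * revProd b d * (a 0)⁻¹ := by
  induction d with
  | zero => simp
  | succ d ih => rw [revProd_succ, ih, revProd_succ]; group

lemma revProd_succ' (f : ℕ → G) (k : ℕ) :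
    revProd f (k + 1) = revProd (fun j => f (j + 1)) k * f 0 := by
  induction k with
  | zero => simp [revProd_succ]
  | succ k ih => rw [revProd_succ, ih, revProd_succ (fun j => f (j + 1)), mul_assoc]

lemma mem_pp (σ : Perm (Fin n)) (x : Fin n) : x ∈ periodicPts ⇑σ :=
  ⟨orderOf σ, orderOf_pos σ, by simp [IsPeriodicPt, IsFixedPt, iterate_eq_pow, pow_orderOf_eq_one]⟩

lemma dpos (σ : Perm (Fin n)) (x : Fin n) : 0 < minimalPeriod ⇑σ x :=
  minimalPeriod_pos_of_mem_periodicPts (mem_pp σ x)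

lemma pow_minPeriod (σ : Perm (Fin n)) (x : Fin n) :
    (σ ^ minimalPeriod ⇑σ x) x = x :=
  isPeriodicPt_minimalPeriod ⇑σ x

lemma pow_mod (σ : Perm (Fin n)) (x : Fin n) (k : ℕ) :
    (σ ^ (k % minimalPeriod ⇑σ x)) x = (σ ^ k) x :=
  iterate_mod_minimalPeriod_eq

lemma pow_eq_pow_iff (σ : Perm (Fin n)) (x : Fin n) {i j : ℕ} :
    (σ ^ i) x = (σ ^ j) x ↔
      i % minimalPeriod ⇑σ x = j % minimalPeriod ⇑σ x := by
  constructor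
  · intro h
    apply iterate_injOn_Iio_minimalPeriod (f := ⇑σ) (x := x)
      (Set.mem_Iio.mpr (Nat.mod_lt _ (dpos σ x))) (Set.mem_Iio.mpr (Nat.mod_lt _ (dpos σ x)))
    show (⇑σ)^[i % _] x = (⇑σ)^[j % _] x
    simp only [iterate_eq_pow]
    rw [pow_mod, pow_mod, h]
  · intro h
    rw [← pow_mod σ x i, ← pow_mod σ x j, h]

lemma cycleProd_def (σ : Perm (Fin n)) (ξ : Fin n → G) (x : Fin n) :
    cycleProd σ ξ x = revProd (fun k => ξ ((σ ^ k) x)) (minimalPeriod ⇑σ x) := rfl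

lemma out_sameCycle (σ : Perm (Fin n)) (x : Fin n) :
    SameCycle σ (Quotient.mk (SameCycle.setoid σ) x).out x := by
  have h : Quotient.mk (SameCycle.setoid σ) (Quotient.mk (SameCycle.setoid σ) x).out
      = Quotient.mk (SameCycle.setoid σ) x := Quotient.out_eq _
  exact Quotient.exact h

lemma out_sameCycle' (σ : Perm (Fin n)) (q : Quotient (SameCycle.setoid σ)) (x : Fin n)
    (h : Quotient.mk (SameCycle.setoid σ) x = q) : SameCycle σ q.out x := by
  have h2 : Quotient.mk (SameCycle.setoid σ) q.out = Quotient.mk (SameCycle.setoid σ) x :=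
    (Quotient.out_eq q).trans h.symm
  exact Quotient.exact h2

/-- The key computation: a semiconjugacy transports minimal periods and conjugacy
classes of cycle products. -/
lemma key_semiconj {ξ ζ : Fin n → G} {σ ρ τ : Perm (Fin n)} {η : Fin n → G}
    (hperm : τ * σ = ρ * τ)
    (hfun : ∀ x, η x * ξ (τ⁻¹ x) = ζ x * η (ρ⁻¹ x)) (x : Fin n) :
    minimalPeriod ⇑ρ (τ x) = minimalPeriod ⇑σ x ∧
      ConjClasses.mk (cycleProd ρ ζ (τ x)) = ConjClasses.mk (cycleProd σ ξ x) := by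
  have hts : ∀ y, τ (σ y) = ρ (τ y) := by
    intro y
    have := congrFun (congrArg (fun (p : Perm (Fin n)) => ⇑p) hperm) y
    simpa [Perm.mul_apply] using this
  have hpow : ∀ (k : ℕ) (y : Fin n), τ ((σ ^ k) y) = (ρ ^ k) (τ y) := by
    intro k
    induction k with
    | zero => simp
    | succ k ih =>
      intro y
      rw [pow_succ', pow_succ', Perm.mul_apply, Perm.mul_apply, hts, ih]
  have hper : ∀ y, minimalPeriod ⇑ρ (τ y) = minimalPeriod ⇑σ y := by
    intro y
    apply Nat.dvd_antisymm
    · apply IsPeriodicPt.minimalPeriod_dvd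
      show (⇑ρ)^[_] (τ y) = τ y
      simp only [iterate_eq_pow]
      rw [← hpow, pow_minPeriod]
    · apply IsPeriodicPt.minimalPeriod_dvd
      show (⇑σ)^[_] y = y
      simp only [iterate_eq_pow]
      apply τ.injective
      rw [hpow, pow_minPeriod]
  have hcomm : ∀ (k : ℕ) (y : Fin n), (σ ^ k) (σ⁻¹ y) = σ⁻¹ ((σ ^ k) y) := by
    intro k y
    have : σ ^ k * σ⁻¹ = σ⁻¹ * σ ^ k := ((Commute.refl σ).inv_left.pow_right k).symm
    have := congrFun (congrArg (fun (p : Perm (Fin n)) => ⇑p) this) y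
    simpa [Perm.mul_apply] using this
  refine ⟨hper x, ?_⟩
  set d := minimalPeriod ⇑σ x with hd
  set a : ℕ → G := fun k => η (τ ((σ ^ k) (σ⁻¹ x))) with ha
  have hterm : ∀ k : ℕ, ζ ((ρ ^ k) (τ x)) = a (k + 1) * ξ ((σ ^ k) x) * (a k)⁻¹ := by
    intro k
    have h1 : (ρ ^ k) (τ x) = τ ((σ ^ k) x) := (hpow k x).symm
    have h2 := hfun (τ ((σ ^ k) x))
    rw [Perm.inv_apply_self] at h2
    have h3 : ρ⁻¹ (τ ((σ ^ k) x)) = τ (σ⁻¹ ((σ ^ k) x)) := by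
      apply ρ.injective
      rw [Perm.apply_inv_self, ← hts, Perm.apply_inv_self]
    have h4 : ζ (τ ((σ ^ k) x)) = η (τ ((σ ^ k) x)) * ξ ((σ ^ k) x) * (η (τ (σ⁻¹ ((σ ^ k) x))))⁻¹ := by
      rw [← h3, eq_comm, mul_inv_eq_iff_eq_mul]
      exact h2
    have e1 : (σ ^ (k + 1)) (σ⁻¹ x) = (σ ^ k) x := by
      rw [pow_succ', Perm.mul_apply, hcomm, Perm.apply_inv_self]
    calc ζ ((ρ ^ k) (τ x)) = η (τ ((σ ^ k) x)) * ξ ((σ ^ k) x) * (η (τ (σ⁻¹ ((σ ^ k) x))))⁻¹ := by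
          rw [h1]; exact h4
    _ = a (k + 1) * ξ ((σ ^ k) x) * (a k)⁻¹ := by
          show _ = η (τ ((σ ^ (k + 1)) (σ⁻¹ x))) * ξ ((σ ^ k) x) * (η (τ ((σ ^ k) (σ⁻¹ x))))⁻¹
          rw [e1, hcomm]
  have hcp : cycleProd ρ ζ (τ x) = a d * cycleProd σ ξ x * (a 0)⁻¹ := by
    rw [cycleProd_def, cycleProd_def, hper x, ← hd]
    rw [show (fun k => ζ ((ρ ^ k) (τ x))) = fun k => a (k + 1) * ξ ((σ ^ k) x) * (a k)⁻¹ from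
      funext hterm]
    exact revProd_telescope a (fun k => ξ ((σ ^ k) x)) d
  have had : a d = a 0 := by
    show η (τ ((σ ^ d) (σ⁻¹ x))) = η (τ ((σ ^ 0) (σ⁻¹ x)))
    rw [pow_zero, hcomm, hd, pow_minPeriod]
    rfl
  rw [hcp, had]
  rw [ConjClasses.mk_eq_mk_iff_isConj]
  exact (isConj_iff.mpr ⟨a 0, rfl⟩).symm

/-- Single-step version of well-definedness. -/
lemma pair_apply (σ : Perm (Fin n)) (ξ : Fin n → G) (z : Fin n) :
    minimalPeriod ⇑σ (σ z) = minimalPeriod ⇑σ z ∧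
      ConjClasses.mk (cycleProd σ ξ (σ z)) = ConjClasses.mk (cycleProd σ ξ z) :=
  key_semiconj (σ := σ) (ρ := σ) (τ := σ) (ξ := ξ) (ζ := ξ) (η := ξ) rfl (fun _ => rfl) z

/-- Well-definedness: the pair (minimal period, conjugacy class of cycle product)
only depends on the cycle. -/
lemma pair_sameCycle (σ : Perm (Fin n)) (ξ : Fin n → G) {x y : Fin n}
    (h : SameCycle σ x y) :
    minimalPeriod ⇑σ y = minimalPeriod ⇑σ x ∧
      ConjClasses.mk (cycleProd σ ξ y) = ConjClasses.mk (cycleProd σ ξ x) := by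
  suffices H : ∀ i : ℕ, minimalPeriod ⇑σ ((σ ^ i) x) = minimalPeriod ⇑σ x ∧
      ConjClasses.mk (cycleProd σ ξ ((σ ^ i) x)) = ConjClasses.mk (cycleProd σ ξ x) by
    obtain ⟨i, -, rfl⟩ := h.exists_pow_eq'
    exact H i
  intro i
  induction i with
  | zero => simp
  | succ i ih =>
    have hstep : (σ ^ (i + 1)) x = σ ((σ ^ i) x) := by
      rw [pow_succ', Perm.mul_apply]
    rw [hstep]
    obtain ⟨h1, h2⟩ := pair_apply σ ξ ((σ ^ i) x)
    obtain ⟨ih1, ih2⟩ := ih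
    exact ⟨h1.trans ih1, h2.trans ih2⟩

lemma count_map_univ {α γ : Type*} [Fintype α] [DecidableEq γ] (f : α → γ) (p : γ) :
    Multiset.count p (Finset.univ.val.map f) = Fintype.card {a : α // f a = p} := by
  classical
  rw [Multiset.count_map, Fintype.card_subtype, Finset.card, Finset.filter_val]
  congr 1
  apply Multiset.filter_congr
  intro a _
  exact eq_comm

/-- Forward direction core: a semiconjugacy implies equal orbit data. -/
lemma orbitData_eq_of_semiconj {ξ ζ : Fin n → G} {σ ρ : Perm (Fin n)} {τ : Perm (Fin n)}
    {η : Fin n → G} (hperm : τ * σ = ρ * τ)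
    (hfun : ∀ x, η x * ξ (τ⁻¹ x) = ζ x * η (ρ⁻¹ x)) :
    orbitData σ ξ = orbitData ρ ζ := by
  classical
  have hρ : ρ = τ * σ * τ⁻¹ := by rw [hperm]; group
  have hσ : σ = τ⁻¹ * ρ * τ⁻¹⁻¹ := by rw [inv_inv, mul_assoc, ← hperm]; group
  have hsc : ∀ a b : Fin n, SameCycle σ a b ↔ SameCycle ρ (τ a) (τ b) := by
    intro a b
    constructor
    · intro h; rw [hρ]; exact h.conj
    · intro h
      have h2 := h.conj (g := τ⁻¹)
      rw [← hσ] at h2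
      simpa using h2
  letI FA : Fintype (Quotient (SameCycle.setoid σ)) := Fintype.ofFinite _
  letI FB : Fintype (Quotient (SameCycle.setoid ρ)) := Fintype.ofFinite _
  let E : Quotient (SameCycle.setoid σ) ≃ Quotient (SameCycle.setoid ρ) :=
    { toFun := Quotient.map ⇑τ (fun a b h => (hsc a b).mp h)
      invFun := Quotient.map ⇑τ⁻¹ (fun a b h => by
        have := (hsc (τ⁻¹ a) (τ⁻¹ b)).mpr
        simp only [Perm.apply_inv_self] at this
        exact this h)
      left_inv := by
        intro q
        induction q using Quotient.inductionOn with
        | h a => simp [Quotient.map_mk]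
      right_inv := by
        intro q
        induction q using Quotient.inductionOn with
        | h a => simp [Quotient.map_mk] }
  show Finset.univ.val.map _ = Finset.univ.val.map _
  rw [← Finset.map_univ_equiv E, Finset.map_val, Multiset.map_map]
  apply Multiset.map_congr rfl
  intro q _
  induction q using Quotient.inductionOn with
  | h a =>
    have hEq : E (Quotient.mk (SameCycle.setoid σ) a) = Quotient.mk (SameCycle.setoid ρ) (τ a) :=
      rfl
    simp only [Function.comp, Equiv.coe_toEmbedding]
    rw [hEq]
    have hout : SameCycle ρ (Quotient.mk (SameCycle.setoid ρ) (τ a)).out (τ a) :=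
      out_sameCycle ρ (τ a)
    obtain ⟨h1, h2⟩ := pair_sameCycle ρ ζ hout.symm
    obtain ⟨h3, h4⟩ := key_semiconj hperm hfun a
    have hout2 : SameCycle σ (Quotient.mk (SameCycle.setoid σ) a).out a :=
      out_sameCycle σ a
    obtain ⟨h5, h6⟩ := pair_sameCycle σ ξ hout2.symm
    refine Prod.ext ?_ ?_
    · show minimalPeriod ⇑σ _ = minimalPeriod ⇑ρ _
      rw [h5, ← h3, h1]
    · show ConjClasses.mk (cycleProd σ ξ _) = ConjClasses.mk (cycleProd ρ ζ _)
      rw [h6, ← h4, h2]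

/-- Backward direction core: equal orbit data yields a semiconjugating pair. -/
lemma exists_semiconj_of_orbitData {ξ ζ : Fin n → G} {σ ρ : Perm (Fin n)}
    (h : orbitData σ ξ = orbitData ρ ζ) :
    ∃ (τ : Perm (Fin n)) (η : Fin n → G),
      τ * σ = ρ * τ ∧ ∀ x, η x * ξ (τ⁻¹ x) = ζ x * η (ρ⁻¹ x) := by
  classical
  unfold orbitData at h
  set A := Quotient (SameCycle.setoid σ) with hA
  set B := Quotient (SameCycle.setoid ρ) with hB
  set f : A → ℕ × ConjClasses G :=
    fun q => (minimalPeriod ⇑σ q.out, ConjClasses.mk (cycleProd σ ξ q.out)) with hf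
  set g : B → ℕ × ConjClasses G :=
    fun r => (minimalPeriod ⇑ρ r.out, ConjClasses.mk (cycleProd ρ ζ r.out)) with hg
  letI FA : Fintype A := Fintype.ofFinite _
  letI FB : Fintype B := Fintype.ofFinite _
  have h' : Finset.univ.val.map f = Finset.univ.val.map g := h
  have hcard : ∀ p, Fintype.card {a : A // f a = p} = Fintype.card {b : B // g b = p} := by
    intro p
    rw [← count_map_univ f p, ← count_map_univ g p, h']
  let e : A ≃ B := Equiv.ofFiberEquiv (f := f) (g := g)
    (fun p => Fintype.equivOfCardEq (hcard p))
  have he : ∀ q, g (e q) = f q := fun q => Equiv.ofFiberEquiv_map _ q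
  have hd : ∀ q : A, minimalPeriod ⇑ρ (e q).out = minimalPeriod ⇑σ q.out :=
    fun q => congrArg Prod.fst (he q)
  have hmkq : ∀ q : A,
      ConjClasses.mk (cycleProd ρ ζ (e q).out) = ConjClasses.mk (cycleProd σ ξ q.out) :=
    fun q => congrArg Prod.snd (he q)
  -- exponent function for σ
  have hex : ∀ x : Fin n, ∃ k : ℕ, (σ ^ k) (Quotient.mk (SameCycle.setoid σ) x).out = x := by
    intro x
    have hsc : SameCycle σ (Quotient.mk (SameCycle.setoid σ) x).out x :=
      out_sameCycle σ x
    obtain ⟨k, -, hk⟩ := hsc.exists_pow_eq'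
    exact ⟨k, hk⟩
  set kf : Fin n → ℕ := fun x => Nat.find (hex x) with hkfdef
  have hkf : ∀ x, (σ ^ kf x) (Quotient.mk (SameCycle.setoid σ) x).out = x :=
    fun x => Nat.find_spec (hex x)
  have htrans : ∀ (q : A) (i j : ℕ),
      ((σ ^ i) q.out = (σ ^ j) q.out) ↔ ((ρ ^ i) (e q).out = (ρ ^ j) (e q).out) := by
    intro q i j
    rw [pow_eq_pow_iff, pow_eq_pow_iff, hd q]
  set t : Fin n → Fin n :=
    fun x => (ρ ^ kf x) (e (Quotient.mk (SameCycle.setoid σ) x)).out with htdef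
  have hclass : ∀ x, Quotient.mk (SameCycle.setoid ρ) (t x)
      = e (Quotient.mk (SameCycle.setoid σ) x) := by
    intro x
    have hsc : SameCycle ρ ((ρ ^ kf x) (e (Quotient.mk (SameCycle.setoid σ) x)).out)
        ((e (Quotient.mk (SameCycle.setoid σ) x)).out) := sameCycle_pow_left.mpr (SameCycle.refl _ _)
    exact (Quotient.sound hsc).trans (Quotient.out_eq _)
  have hinj : Function.Injective t := by
    intro x y hxy
    have hq : Quotient.mk (SameCycle.setoid σ) x = Quotient.mk (SameCycle.setoid σ) y :=
      e.injective (by rw [← hclass x, ← hclass y, hxy])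
    have h2 : (ρ ^ kf x) (e (Quotient.mk (SameCycle.setoid σ) x)).out
        = (ρ ^ kf y) (e (Quotient.mk (SameCycle.setoid σ) x)).out := by
      have := hxy
      rw [htdef] at this
      simp only [] at this
      rw [← hq] at this
      exact this
    have h3 : (σ ^ kf x) (Quotient.mk (SameCycle.setoid σ) x).out
        = (σ ^ kf y) (Quotient.mk (SameCycle.setoid σ) x).out :=
      (htrans _ _ _).mpr h2
    rw [hkf x] at h3
    conv_rhs at h3 => rw [hq]
    rw [hkf y] at h3
    exact h3
  let τ : Perm (Fin n) := Equiv.ofBijective t (Finite.injective_iff_bijective.mp hinj)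
  have hτ : ∀ x, τ x = t x := fun _ => rfl
  have htau : ∀ (q : A) (m : ℕ), τ ((σ ^ m) q.out) = (ρ ^ m) (e q).out := by
    intro q m
    set y := (σ ^ m) q.out with hy
    have hyq : Quotient.mk (SameCycle.setoid σ) y = q := by
      refine (Quotient.sound ?_).trans (Quotient.out_eq q)
      exact sameCycle_pow_left.mpr (SameCycle.refl _ _)
    have h1 : (σ ^ kf y) q.out = (σ ^ m) q.out := by
      have := hkf y
      rw [hyq] at this
      rw [this, hy]
    have h2 : (ρ ^ kf y) (e q).out = (ρ ^ m) (e q).out := (htrans _ _ _).mp h1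
    rw [hτ, htdef]
    simp only []
    rw [hyq, h2]
  have hperm : τ * σ = ρ * τ := by
    ext x
    simp only [Perm.mul_apply]
    have hx1 : σ x = (σ ^ (kf x + 1)) (Quotient.mk (SameCycle.setoid σ) x).out := by
      rw [pow_succ', Perm.mul_apply, hkf]
    have hx2 : x = (σ ^ kf x) (Quotient.mk (SameCycle.setoid σ) x).out := (hkf x).symm
    rw [hx1, htau]
    conv_rhs => rw [hx2, htau]
    rw [pow_succ', Perm.mul_apply]
  set ξ' : Fin n → G := fun y => ξ (τ⁻¹ y) with hξ'
  have hcp : ∀ q : A, cycleProd ρ ξ' (e q).out = cycleProd σ ξ q.out := by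
    intro q
    rw [cycleProd_def, cycleProd_def, hd q]
    congr 1
    funext k
    show ξ (τ⁻¹ ((ρ ^ k) (e q).out)) = ξ ((σ ^ k) q.out)
    rw [← htau q k, Perm.inv_apply_self]
  have hconj : ∀ r : B, ∃ c : G, c * cycleProd ρ ξ' r.out * c⁻¹ = cycleProd ρ ζ r.out := by
    intro r
    obtain ⟨q, rfl⟩ : ∃ q, e q = r := ⟨e.symm r, e.apply_symm_apply r⟩
    rw [hcp q, ← isConj_iff]
    exact (ConjClasses.mk_eq_mk_iff_isConj.mp (hmkq q)).symm
  set cc : B → G := fun r => Classical.choose (hconj r) with hccdef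
  have hcc : ∀ r, cc r * cycleProd ρ ξ' r.out * (cc r)⁻¹ = cycleProd ρ ζ r.out :=
    fun r => Classical.choose_spec (hconj r)
  -- exponent function for ρ
  have hexρ : ∀ y : Fin n, ∃ k : ℕ, (ρ ^ k) (Quotient.mk (SameCycle.setoid ρ) y).out = y := by
    intro y
    have hsc : SameCycle ρ (Quotient.mk (SameCycle.setoid ρ) y).out y :=
      out_sameCycle ρ y
    obtain ⟨k, -, hk⟩ := hsc.exists_pow_eq'
    exact ⟨k, hk⟩
  set kg : Fin n → ℕ := fun y => Nat.find (hexρ y) with hkgdef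
  have hkg : ∀ y, (ρ ^ kg y) (Quotient.mk (SameCycle.setoid ρ) y).out = y :=
    fun y => Nat.find_spec (hexρ y)
  have hkg_min : ∀ y j, (ρ ^ j) (Quotient.mk (SameCycle.setoid ρ) y).out = y → kg y ≤ j :=
    fun y j hj => Nat.find_min' (hexρ y) hj
  set Z : B → ℕ → G := fun r k => revProd (fun j => ζ ((ρ ^ (j + 1)) r.out)) k with hZdef
  set X : B → ℕ → G := fun r k => revProd (fun j => ξ' ((ρ ^ (j + 1)) r.out)) k with hXdef
  set w : B → G := fun r => ζ r.out * cc r * (ξ' r.out)⁻¹ with hwdef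
  set η : Fin n → G := fun y =>
    Z (Quotient.mk (SameCycle.setoid ρ) y) (kg y)
      * w (Quotient.mk (SameCycle.setoid ρ) y)
      * (X (Quotient.mk (SameCycle.setoid ρ) y) (kg y))⁻¹ with hηdef
  have hclsinv : ∀ y, Quotient.mk (SameCycle.setoid ρ) (ρ⁻¹ y)
      = Quotient.mk (SameCycle.setoid ρ) y := by
    intro y
    apply Quotient.sound
    show SameCycle ρ (ρ⁻¹ y) y
    exact ⟨1, by simp⟩
  have hmain : ∀ y, η y * ξ' y = ζ y * η (ρ⁻¹ y) := by
    intro y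
    set r : B := Quotient.mk (SameCycle.setoid ρ) y with hr
    set d := minimalPeriod ⇑ρ r.out with hdd
    have hdpos : 0 < d := dpos ρ r.out
    have hky : (ρ ^ kg y) r.out = y := hkg y
    have hky' : (ρ ^ kg (ρ⁻¹ y)) r.out = ρ⁻¹ y := by
      have := hkg (ρ⁻¹ y); rw [hclsinv y] at this; exact this
    have hky'_min : ∀ j, (ρ ^ j) r.out = ρ⁻¹ y → kg (ρ⁻¹ y) ≤ j := by
      intro j hj
      apply hkg_min (ρ⁻¹ y) j
      rw [hclsinv y]; exact hj
    have hη1 : η y = Z r (kg y) * w r * (X r (kg y))⁻¹ := rfl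
    have hη2 : η (ρ⁻¹ y) = Z r (kg (ρ⁻¹ y)) * w r * (X r (kg (ρ⁻¹ y)))⁻¹ := by
      rw [hηdef]
      simp only []
      rw [hclsinv y]
    rcases Nat.eq_zero_or_pos (kg y) with hk0 | hkpos
    · -- kg y = 0, so y = r.out
      have hyb : y = r.out := by rw [← hky, hk0, pow_zero]; rfl
      have hstep : ρ ((ρ ^ (d - 1)) r.out) = y := by
        rw [← Perm.mul_apply, ← pow_succ', show d - 1 + 1 = d from by omega,
          hdd, pow_minPeriod, ← hyb]
      have hwit : (ρ ^ (d - 1)) r.out = ρ⁻¹ y := by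
        apply ρ.injective
        rw [Perm.apply_inv_self, hstep]
      have hkinv : kg (ρ⁻¹ y) = d - 1 := by
        apply le_antisymm (hky'_min _ hwit)
        -- minimality: any witness j satisfies d - 1 ≤ j
        have hj := hky'
        have hper : (ρ ^ (kg (ρ⁻¹ y) + 1)) r.out = r.out := by
          rw [pow_succ', Perm.mul_apply, hj, Perm.apply_inv_self, hyb]
        have hdvd : d ∣ kg (ρ⁻¹ y) + 1 := by
          apply IsPeriodicPt.minimalPeriod_dvd
          show (⇑ρ)^[_] r.out = r.out
          simp only [iterate_eq_pow]
          exact hper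
        have := Nat.le_of_dvd (Nat.succ_pos _) hdvd
        omega
      have hP : cycleProd ρ ξ' r.out = X r (d - 1) * ξ' r.out := by
        rw [cycleProd_def, ← hdd]
        conv_lhs => rw [show d = (d - 1) + 1 by omega]
        rw [revProd_succ']
        simp [hXdef]
      have hQ : cycleProd ρ ζ r.out = Z r (d - 1) * ζ r.out := by
        rw [cycleProd_def, ← hdd]
        conv_lhs => rw [show d = (d - 1) + 1 by omega]
        rw [revProd_succ']
        simp [hZdef]
      have hPQ : cc r * (X r (d - 1) * ξ' r.out) = (Z r (d - 1) * ζ r.out) * cc r := by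
        rw [← hP, ← hQ, ← hcc r]; group
      rw [hη1, hη2, hk0, hkinv, hwdef]
      simp only []
      rw [hyb]
      rw [hZdef, hXdef]
      simp only [revProd_zero]
      rw [show Z r (d-1) * (ζ r.out * cc r * (ξ' r.out)⁻¹) * (X r (d-1))⁻¹
          = (Z r (d-1) * ζ r.out * cc r) * ((X r (d-1) * ξ' r.out)⁻¹ * (ξ' r.out)) * (ξ' r.out)⁻¹
          from by group]
      rw [← hPQ]
      group
    · -- kg y = k + 1
      set k := kg y - 1 with hkk
      have hksucc' : kg y = k + 1 := by omega
      have hyk : (ρ ^ (k + 1)) r.out = y := by rw [← hksucc']; exact hky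
      have hwit : (ρ ^ k) r.out = ρ⁻¹ y := by
        apply ρ.injective
        rw [Perm.apply_inv_self, ← hyk, pow_succ', Perm.mul_apply]
      have hkinv : kg (ρ⁻¹ y) = k := by
        apply le_antisymm (hky'_min _ hwit)
        by_contra hlt
        push_neg at hlt
        have hj := hky'
        have : (ρ ^ (kg (ρ⁻¹ y) + 1)) r.out = y := by
          rw [pow_succ', Perm.mul_apply, hj, Perm.apply_inv_self]
        have hle : kg y ≤ kg (ρ⁻¹ y) + 1 := hkg_min y _ this
        omega
      rw [hη1, hη2, hksucc', hkinv]
      rw [hZdef, hXdef]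
      simp only []
      rw [revProd_succ (fun j => ζ ((ρ ^ (j + 1)) r.out)) k,
        revProd_succ (fun j => ξ' ((ρ ^ (j + 1)) r.out)) k]
      rw [hyk]
      group

  refine ⟨τ, η, hperm, ?_⟩
  intro x
  exact hmain x

end WreathConj

/-- Two elements `(ξ, σ)` and `(ζ, ρ)` of the wreath product
`G ≀ Sₙ = (Fin n → G) ⋊ Perm (Fin n)` are conjugate if and only if the multisets,
indexed by orbits, of pairs (orbit size, conjugacy class of the cycle product along the
orbit) coincide. -/
theorem stmt4 {G : Type*} [Group G] [Finite G] {n : ℕ} (hn : 1 ≤ n)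
    (ξ ζ : Fin n → G) (σ ρ : Equiv.Perm (Fin n)) :
    IsConj (⟨ξ, σ⟩ : (Fin n → G) ⋊[wreathAction G n] Equiv.Perm (Fin n)) ⟨ζ, ρ⟩ ↔
      orbitData σ ξ = orbitData ρ ζ := by
  constructor
  · intro hc
    obtain ⟨c, hc⟩ := isConj_iff.mp hc
    have hc' : c * ⟨ξ, σ⟩ = (⟨ζ, ρ⟩ : (Fin n → G) ⋊[wreathAction G n] Equiv.Perm (Fin n)) * c := by
      rw [← hc]; group
    have hr : c.right * σ = ρ * c.right := congrArg SemidirectProduct.right hc'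
    have hl := congrArg SemidirectProduct.left hc'
    apply WreathConj.orbitData_eq_of_semiconj (η := c.left) hr
    intro x
    exact congrFun hl x
  · intro h
    obtain ⟨τ, η, hperm, hfun⟩ := WreathConj.exists_semiconj_of_orbitData h
    apply isConj_iff.mpr
    refine ⟨⟨η, τ⟩, ?_⟩
    have hsemi : (⟨η, τ⟩ : (Fin n → G) ⋊[wreathAction G n] Equiv.Perm (Fin n)) * ⟨ξ, σ⟩
        = (⟨ζ, ρ⟩ : (Fin n → G) ⋊[wreathAction G n] Equiv.Perm (Fin n)) * ⟨η, τ⟩ := by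
      apply SemidirectProduct.ext
      · show η * (wreathAction G n τ) ξ = ζ * (wreathAction G n ρ) η
        funext x
        exact hfun x
      · exact hperm
    rw [hsemi]
    group
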